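/- Let Z be a real M×K matrix and let α > 0. Set R = Z Zᵀ and C = R (R + α⁻² I)⁻¹. Then C minimizes the Conceptor loss L(B) = ‖Z − B Z‖²_fro + α⁻² ‖B‖²_fro over all real M×M matrices B, i.e., L(C) ≤ L(B) for every M×M matrix B. -/
import Mathlib


open Matrix BigOperators

/-- Squared Frobenius norm of a real matrix. -/
noncomputable def frobSq {m n : ℕ} (A : Matrix (Fin m) (Fin n) ℝ) : ℝ :=
  ∑ i, ∑ j, (A i j) ^ 2

lemma frobSq_trace {m n : ℕ} (A : Matrix (Fin m) (Fin n) ℝ) :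
    frobSq A = trace (A * Aᵀ) := by
  simp [frobSq, trace, Matrix.mul_apply, Matrix.diag, sq]

lemma frobSq_nonneg {m n : ℕ} (A : Matrix (Fin m) (Fin n) ℝ) : 0 ≤ frobSq A :=
  Finset.sum_nonneg fun _ _ => Finset.sum_nonneg fun _ _ => sq_nonneg _

lemma trace_sym {m n : ℕ} (X Y : Matrix (Fin m) (Fin n) ℝ) :
    trace (Y * Xᵀ) = trace (X * Yᵀ) := by
  rw [← trace_transpose (Y * Xᵀ), transpose_mul, transpose_transpose]

lemma frobSq_sub {m n : ℕ} (X Y : Matrix (Fin m) (Fin n) ℝ) :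
    frobSq (X - Y) = frobSq X - 2 * trace (X * Yᵀ) + frobSq Y := by
  rw [frobSq_trace, frobSq_trace, frobSq_trace, transpose_sub, Matrix.sub_mul, Matrix.mul_sub,
    Matrix.mul_sub, trace_sub, trace_sub, trace_sub, trace_sym Y X]
  ring

lemma frobSq_add {m n : ℕ} (X Y : Matrix (Fin m) (Fin n) ℝ) :
    frobSq (X + Y) = frobSq X + 2 * trace (X * Yᵀ) + frobSq Y := by
  rw [frobSq_trace, frobSq_trace, frobSq_trace, transpose_add, Matrix.add_mul, Matrix.mul_add,
    Matrix.mul_add, trace_add, trace_add, trace_add, trace_sym Y X]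
  ring

/-- The Conceptor `C = R (R + α⁻² I)⁻¹` with `R = Z Zᵀ` minimizes the Conceptor loss
`L(B) = ‖Z − B Z‖²_fro + α⁻² ‖B‖²_fro` over all real M×M matrices `B` (Eq. (5)–(6)). -/
theorem conceptor_minimizes_loss
    (M K : ℕ) (Z : Matrix (Fin M) (Fin K) ℝ) (α : ℝ) (hα : 0 < α)
    (R : Matrix (Fin M) (Fin M) ℝ) (hR : R = Z * Zᵀ)
    (C : Matrix (Fin M) (Fin M) ℝ)
    (hC : C = R * (R + (α ^ 2)⁻¹ • (1 : Matrix (Fin M) (Fin M) ℝ))⁻¹)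
    (L : Matrix (Fin M) (Fin M) ℝ → ℝ)
    (hL : ∀ B : Matrix (Fin M) (Fin M) ℝ,
      L B = frobSq (Z - B * Z) + (α ^ 2)⁻¹ * frobSq B) :
    ∀ B : Matrix (Fin M) (Fin M) ℝ, L C ≤ L B := by
  set ε : ℝ := (α ^ 2)⁻¹ with hεdef
  have hε : 0 < ε := inv_pos.mpr (pow_pos hα 2)
  set S : Matrix (Fin M) (Fin M) ℝ := R + ε • 1 with hSdef
  -- S is positive definite, hence invertible
  have hZZ : (Z * Zᵀ).PosSemidef := by
    have h := Matrix.posSemidef_self_mul_conjTranspose Z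
    have : Zᴴ = Zᵀ := by ext i j; simp [conjTranspose_apply]
    rwa [this] at h
  have hS : S.PosDef := by
    rw [hSdef, hR, smul_one_eq_diagonal]
    exact Matrix.PosDef.posSemidef_add hZZ (Matrix.posDef_diagonal_iff.mpr fun _ => hε)
  have hdet : IsUnit S.det := hS.det_pos.ne'.isUnit
  have hCS : C * S = Z * Zᵀ := by
    rw [hC, Matrix.mul_assoc, Matrix.nonsing_inv_mul S hdet, Matrix.mul_one, hR]
  have hkey : Z * Zᵀ - C * (Z * Zᵀ) = ε • C := by
    rw [hSdef, hR, Matrix.mul_add, Matrix.mul_smul, Matrix.mul_one] at hCS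
    exact (eq_sub_of_add_eq (by rw [add_comm]; exact hCS)).symm
  intro B
  rw [hL B, hL C]
  have hBeq : B = C + (B - C) := by abel
  have e2 : frobSq B = frobSq C + 2 * trace (C * (B - C)ᵀ) + frobSq (B - C) := by
    conv_lhs => rw [hBeq]
    exact frobSq_add C (B - C)
  have hrw : Z - B * Z = (Z - C * Z) - (B - C) * Z := by
    rw [Matrix.sub_mul]; abel
  have hcross : (Z - C * Z) * ((B - C) * Z)ᵀ = ε • (C * (B - C)ᵀ) := by
    rw [transpose_mul, ← Matrix.mul_assoc, Matrix.mul_assoc (Z - C * Z) Zᵀ,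
      ← Matrix.mul_assoc (Z - C * Z) Zᵀ, Matrix.sub_mul, Matrix.mul_assoc C Z Zᵀ, hkey,
      Matrix.smul_mul]
  have e1 : frobSq (Z - B * Z)
      = frobSq (Z - C * Z) - 2 * (ε * trace (C * (B - C)ᵀ)) + frobSq ((B - C) * Z) := by
    rw [hrw, frobSq_sub, hcross, trace_smul, smul_eq_mul]
  rw [e1, e2]
  nlinarith [mul_nonneg hε.le (frobSq_nonneg (B - C)), frobSq_nonneg ((B - C) * Z)]
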